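/- arXiv:0710.1854 — 2 statements merged into one kernel-verified Lean document; each statement's English description precedes it below -/
import Mathlib

section
/- Let Ω ⊂ ℂ be a connected open set, symmetric under complex conjugation and containing an open real interval I, and let C = (x, y) : Ω → ℂ² be holomorphic with C(r) ∈ ℝ² for all r ∈ I (so that C(z̄) is the componentwise complex conjugate of C(z)). For z = s + it ∈ Ω define P(s,t) = (C(z) + C(z̄))/2 ∈ ℝ². Let W be an open subset of {(s,t) : t > 0} such that P restricted to W is a C¹ diffeomorphism onto an open set E ⊂ ℝ², and assume [C'(z), C'(z̄)] ≠ 0 for all corresponding z. Suppose F : E → ℝ is C² and satisfies ∇F(P(s,t)) = (i/2)·R·(C(z) − C(z̄)) for all (s,t) ∈ W (note the right-hand side is a real vector). Then det(D²F) = +1 on E; in particular the graph of F is a definite improper affine sphere. -/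
noncomputable section

/-- Determinant of the 2×2 complex matrix with columns `X`, `Y`. -/
def det2C (X Y : ℂ × ℂ) : ℂ := X.1 * Y.2 - X.2 * Y.1

/-- Counterclockwise rotation by 90 degrees, extended complex-linearly: `R(x,y) = (−y, x)`. -/
def rotC (X : ℂ × ℂ) : ℂ × ℂ := (-X.2, X.1)

/-- Gradient of `F : ℝ² → ℝ`. -/
def grad (F : ℝ × ℝ → ℝ) (p : ℝ × ℝ) : ℝ × ℝ :=
  (fderiv ℝ F p (1, 0), fderiv ℝ F p (0, 1))

/-- Hessian of `F` at `p`, as a bilinear form. -/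
def hess (F : ℝ × ℝ → ℝ) (p : ℝ × ℝ) (a b : ℝ × ℝ) : ℝ :=
  fderiv ℝ (fderiv ℝ F) p a b

/-- Determinant of the Hessian matrix of `F` at `p`. -/
def hessDet (F : ℝ × ℝ → ℝ) (p : ℝ × ℝ) : ℝ :=
  hess F p (1, 0) (1, 0) * hess F p (0, 1) (0, 1)
    - hess F p (1, 0) (0, 1) * hess F p (0, 1) (1, 0)

/-- The complex point `z = s + it` attached to `(s,t) ∈ ℝ²`. -/
def zOf (w : ℝ × ℝ) : ℂ := (w.1 : ℂ) + (w.2 : ℂ) * Complex.I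

/-- Complexification of a real plane vector. -/
def toC2 (x : ℝ × ℝ) : ℂ × ℂ := ((x.1 : ℂ), (x.2 : ℂ))

open Complex Filter

lemma hasDerivAt_conj_conj {f : ℂ → ℂ} {d z : ℂ}
    (h : HasDerivAt f d (starRingEnd ℂ z)) :
    HasDerivAt (fun w => starRingEnd ℂ (f (starRingEnd ℂ w))) (starRingEnd ℂ d) z := by
  have hc : HasFDerivAt (fun w : ℂ => starRingEnd ℂ w) (Complex.conjCLE.toContinuousLinearMap) z :=
    Complex.conjCLE.hasFDerivAt
  have hc' : HasFDerivAt (fun w : ℂ => starRingEnd ℂ w)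
      (Complex.conjCLE.toContinuousLinearMap) (f (starRingEnd ℂ z)) :=
    Complex.conjCLE.hasFDerivAt
  have hf : HasFDerivAt f ((ContinuousLinearMap.smulRight (1 : ℂ →L[ℂ] ℂ) d).restrictScalars ℝ)
      (starRingEnd ℂ z) := h.hasFDerivAt.restrictScalars ℝ
  have hcomp : HasFDerivAt (fun w => starRingEnd ℂ (f (starRingEnd ℂ w)))
      ((Complex.conjCLE.toContinuousLinearMap).comp
        (((ContinuousLinearMap.smulRight (1 : ℂ →L[ℂ] ℂ) d).restrictScalars ℝ).comp
          Complex.conjCLE.toContinuousLinearMap)) z := hc'.comp z (hf.comp z hc)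
  have h2 : HasFDerivAt (fun w => starRingEnd ℂ (f (starRingEnd ℂ w)))
      (ContinuousLinearMap.smulRight (1 : ℂ →L[ℂ] ℂ) (starRingEnd ℂ d)) z := by
    refine hasFDerivAt_of_restrictScalars ℝ hcomp ?_
    ext1 w
    simp [Complex.conjCLE_apply, mul_comm]
  simpa using h2.hasDerivAt

lemma HasDerivAt.fst' {f : ℂ → ℂ × ℂ} {d : ℂ × ℂ} {z : ℂ} (h : HasDerivAt f d z) :
    HasDerivAt (fun w => (f w).1) d.1 z := by
  simpa using (h.hasFDerivAt.fst).hasDerivAt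

lemma HasDerivAt.snd' {f : ℂ → ℂ × ℂ} {d : ℂ × ℂ} {z : ℂ} (h : HasDerivAt f d z) :
    HasDerivAt (fun w => (f w).2) d.2 z := by
  simpa using (h.hasFDerivAt.snd).hasDerivAt

def zCLM : ℝ × ℝ →L[ℝ] ℂ := Complex.equivRealProdCLM.symm.toContinuousLinearMap

lemma zCLM_apply (w : ℝ × ℝ) : zCLM w = zOf w := by
  simp [zCLM, zOf, Complex.equivRealProdCLM_symm_apply]

lemma hasFDerivAt_zOf (w : ℝ × ℝ) : HasFDerivAt zOf zCLM w := by
  have h := zCLM.hasFDerivAt (x := w)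
  exact h.congr_of_eventuallyEq (Filter.Eventually.of_forall fun v => (zCLM_apply v).symm)

lemma reflectC {Ω : Set ℂ} (hΩo : IsOpen Ω) (hΩconn : IsPreconnected Ω)
    (hΩsym : ∀ z ∈ Ω, starRingEnd ℂ z ∈ Ω) {a b : ℝ} (hab : a < b)
    (hIΩ : ∀ r : ℝ, r ∈ Set.Ioo a b → (r : ℂ) ∈ Ω)
    {C : ℂ → ℂ × ℂ} (hC : DifferentiableOn ℂ C Ω)
    (hreal : ∀ r : ℝ, r ∈ Set.Ioo a b → (C r).1.im = 0 ∧ (C r).2.im = 0) :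
    Set.EqOn C (fun z => (starRingEnd ℂ (C (starRingEnd ℂ z)).1,
      starRingEnd ℂ (C (starRingEnd ℂ z)).2)) Ω := by
  set σ := starRingEnd ℂ with hσdef
  set G : ℂ → ℂ × ℂ := fun z => (σ ((C (σ z)).1), σ ((C (σ z)).2)) with hGdef
  have hGdiff : DifferentiableOn ℂ G Ω := by
    intro z hz
    have hσz : σ z ∈ Ω := hΩsym z hz
    have hCσ : DifferentiableAt ℂ C (σ z) := (hC.differentiableAt (hΩo.mem_nhds hσz))
    have hCd := hCσ.hasDerivAt
    have h1 := hasDerivAt_conj_conj (hCd.fst')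
    have h2 := hasDerivAt_conj_conj (hCd.snd')
    exact ((h1.prodMk h2).differentiableAt).differentiableWithinAt
  have hCa : AnalyticOnNhd ℂ C Ω := hC.analyticOnNhd hΩo
  have hGa : AnalyticOnNhd ℂ G Ω := hGdiff.analyticOnNhd hΩo
  set m : ℝ := (a + b) / 2 with hmdef
  have hmI : m ∈ Set.Ioo a b := ⟨by simp only [hmdef]; linarith, by simp only [hmdef]; linarith⟩
  set u : ℕ → ℂ := fun n => ((m + (b - a) / (2 * ((n : ℝ) + 2)) : ℝ) : ℂ) with hudef
  have hba : (0:ℝ) < b - a := by linarith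
  have hpos : ∀ n : ℕ, (0:ℝ) < (b - a) / (2 * ((n : ℝ) + 2)) := by
    intro n; positivity
  have hsmall : ∀ n : ℕ, (b - a) / (2 * ((n : ℝ) + 2)) ≤ (b - a) / 4 := by
    intro n
    have hn : (0:ℝ) ≤ (n : ℝ) := n.cast_nonneg
    exact div_le_div_of_nonneg_left (by linarith) (by norm_num) (by linarith)
  have hmem : ∀ n : ℕ, (m + (b - a) / (2 * ((n : ℝ) + 2))) ∈ Set.Ioo a b := by
    intro n
    constructor
    · have := hpos n; simp only [hmdef]; linarith
    · have := hsmall n; simp only [hmdef]; linarith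
  have htendR : Tendsto (fun n : ℕ => m + (b - a) / (2 * ((n : ℝ) + 2))) atTop (nhds m) := by
    have hdiv : Tendsto (fun n : ℕ => (b - a) / (2 * ((n : ℝ) + 2))) atTop (nhds 0) := by
      apply Tendsto.div_atTop (tendsto_const_nhds)
      apply Tendsto.const_mul_atTop (by norm_num : (0:ℝ) < 2)
      exact tendsto_atTop_add_const_right _ 2 tendsto_natCast_atTop_atTop
    simpa using tendsto_const_nhds.add hdiv
  have htend : Tendsto u atTop (nhdsWithin ((m : ℂ)) {(m : ℂ)}ᶜ) := by
    apply tendsto_nhdsWithin_of_tendsto_nhds_of_eventually_within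
    · exact (Complex.continuous_ofReal.tendsto m).comp htendR
    · filter_upwards with n
      have := hpos n
      simp only [hudef, Set.mem_compl_iff, Set.mem_singleton_iff, Complex.ofReal_inj]
      intro h
      linarith
  have heqreal : ∀ n : ℕ, C (u n) = G (u n) := by
    intro n
    have hre := hreal _ (hmem n)
    simp only [hudef, hGdef, hσdef, Complex.conj_ofReal]
    rw [Complex.conj_eq_iff_im.2 hre.1, Complex.conj_eq_iff_im.2 hre.2]
  exact hCa.eqOn_of_preconnected_of_frequently_eq hGa hΩconn (hIΩ m hmI)
    (htend.frequently (Frequently.of_forall heqreal))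

/-- If `F` satisfies `∇F(P(s,t)) = (i/2)·R·(C(z) − C(z̄))`, where
`P(s,t) = (C(z) + C(z̄))/2` for a holomorphic curve `C` that is real on the real interval
`I`, then `det(D²F) = +1` on `E = P(W)`: the graph of the outer area distance `F` is
a definite improper affine sphere. -/
theorem statement11
    (Ω : Set ℂ) (hΩo : IsOpen Ω) (hΩconn : IsPreconnected Ω)
    (hΩsym : ∀ z ∈ Ω, starRingEnd ℂ z ∈ Ω)
    (a b : ℝ) (hab : a < b) (hIΩ : ∀ r : ℝ, r ∈ Set.Ioo a b → (r : ℂ) ∈ Ω)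
    (C : ℂ → ℂ × ℂ) (hC : DifferentiableOn ℂ C Ω)
    (hreal : ∀ r : ℝ, r ∈ Set.Ioo a b → (C r).1.im = 0 ∧ (C r).2.im = 0)
    (W : Set (ℝ × ℝ)) (hWo : IsOpen W) (hWt : ∀ w ∈ W, 0 < w.2)
    (hWΩ : ∀ w ∈ W, zOf w ∈ Ω)
    (P : ℝ × ℝ → ℝ × ℝ)
    (hP : ∀ w ∈ W,
      toC2 (P w) = (2⁻¹ : ℂ) • (C (zOf w) + C (starRingEnd ℂ (zOf w))))
    (E : Set (ℝ × ℝ)) (hEo : IsOpen E)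
    (hPreg : ContDiffOn ℝ 1 P W) (hPbij : Set.BijOn P W E)
    (Pinv : ℝ × ℝ → ℝ × ℝ) (hPinv : ContDiffOn ℝ 1 Pinv E)
    (hPinvP : ∀ w ∈ W, Pinv (P w) = w)
    (hCdet : ∀ w ∈ W,
      det2C (deriv C (zOf w)) (deriv C (starRingEnd ℂ (zOf w))) ≠ 0)
    (F : ℝ × ℝ → ℝ) (hF : ContDiffOn ℝ 2 F E)
    (hgrad : ∀ w ∈ W,
      toC2 (grad F (P w))
        = (Complex.I / 2) • rotC (C (zOf w) - C (starRingEnd ℂ (zOf w)))) :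
    ∀ x ∈ E, hessDet F x = 1 := by
  have hrefl := reflectC hΩo hΩconn hΩsym hab hIΩ hC hreal
  have hconjC : ∀ z ∈ Ω, C (starRingEnd ℂ z)
      = (starRingEnd ℂ (C z).1, starRingEnd ℂ (C z).2) := by
    intro z hz
    have h := hrefl (hΩsym z hz)
    simpa using h
  have hderivC : ∀ z ∈ Ω, deriv C (starRingEnd ℂ z)
      = (starRingEnd ℂ (deriv C z).1, starRingEnd ℂ (deriv C z).2) := by
    intro z hz
    have hz' : starRingEnd ℂ z ∈ Ω := hΩsym z hz
    have hCz : DifferentiableAt ℂ C z := hC.differentiableAt (hΩo.mem_nhds hz)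
    have hCd := hCz.hasDerivAt
    have hx : HasDerivAt (fun w => (C w).1) (deriv C z).1
        (starRingEnd ℂ (starRingEnd ℂ z)) := by simpa using hCd.fst'
    have hy : HasDerivAt (fun w => (C w).2) (deriv C z).2
        (starRingEnd ℂ (starRingEnd ℂ z)) := by simpa using hCd.snd'
    have h1 := hasDerivAt_conj_conj hx
    have h2 := hasDerivAt_conj_conj hy
    have hev : ∀ᶠ w in nhds (starRingEnd ℂ z), C w
        = (starRingEnd ℂ ((C (starRingEnd ℂ w)).1), starRingEnd ℂ ((C (starRingEnd ℂ w)).2)) := by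
      filter_upwards [hΩo.mem_nhds hz'] with w hwΩ
      have h := hconjC (starRingEnd ℂ w) (hΩsym w hwΩ)
      rw [Complex.conj_conj] at h
      exact h
    have hev1 : (fun w => (C w).1)
        =ᶠ[nhds (starRingEnd ℂ z)] (fun w => starRingEnd ℂ ((C (starRingEnd ℂ w)).1)) := by
      filter_upwards [hev] with w hw
      rw [hw]
    have hev2 : (fun w => (C w).2)
        =ᶠ[nhds (starRingEnd ℂ z)] (fun w => starRingEnd ℂ ((C (starRingEnd ℂ w)).2)) := by
      filter_upwards [hev] with w hw
      rw [hw]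
    have hx' : HasDerivAt (fun w => (C w).1) (starRingEnd ℂ (deriv C z).1)
        (starRingEnd ℂ z) := h1.congr_of_eventuallyEq hev1
    have hy' : HasDerivAt (fun w => (C w).2) (starRingEnd ℂ (deriv C z).2)
        (starRingEnd ℂ z) := h2.congr_of_eventuallyEq hev2
    have : HasDerivAt C (starRingEnd ℂ (deriv C z).1, starRingEnd ℂ (deriv C z).2)
        (starRingEnd ℂ z) := hx'.prodMk hy'
    exact this.deriv
  -- real formulas for P and grad F ∘ P on W
  have hPN : ∀ v ∈ W, P v = (((C (zOf v)).1).re, ((C (zOf v)).2).re) := by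
    intro v hv
    have h := hP v hv
    rw [hconjC _ (hWΩ v hv)] at h
    have h1 := congrArg Prod.fst h
    have h2 := congrArg Prod.snd h
    simp only [toC2, Prod.smul_fst, Prod.smul_snd, Prod.fst_add, Prod.snd_add,
      smul_eq_mul] at h1 h2
    rw [Complex.add_conj] at h1 h2
    refine Prod.ext ?_ ?_
    · have : ((P v).1 : ℂ) = ((((C (zOf v)).1).re : ℝ) : ℂ) := by
        rw [h1]; push_cast; ring
      exact_mod_cast this
    · have : ((P v).2 : ℂ) = ((((C (zOf v)).2).re : ℝ) : ℂ) := by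
        rw [h2]; push_cast; ring
      exact_mod_cast this
  have hGR : ∀ v ∈ W, grad F (P v) = (((C (zOf v)).2).im, -((C (zOf v)).1).im) := by
    intro v hv
    have h := hgrad v hv
    rw [hconjC _ (hWΩ v hv)] at h
    have h1 := congrArg Prod.fst h
    have h2 := congrArg Prod.snd h
    simp only [toC2, rotC, Prod.smul_fst, Prod.smul_snd, Prod.fst_sub, Prod.snd_sub,
      smul_eq_mul] at h1 h2
    rw [Complex.sub_conj] at h1 h2
    refine Prod.ext ?_ ?_
    · have : ((grad F (P v)).1 : ℂ) = ((((C (zOf v)).2).im : ℝ) : ℂ) := by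
        rw [h1]
        have : Complex.I * Complex.I = -1 := Complex.I_mul_I
        push_cast
        field_simp
        ring_nf
        rw [Complex.I_sq]
        ring
      exact_mod_cast this
    · have : ((grad F (P v)).2 : ℂ) = (((-((C (zOf v)).1).im : ℝ)) : ℂ) := by
        rw [h2]
        push_cast
        field_simp
        ring_nf
        rw [Complex.I_sq]
        ring
      exact_mod_cast this
  -- main computation at a point
  intro q hq
  obtain ⟨w, hw, rfl⟩ := hPbij.surjOn hq
  have hpE : P w ∈ E := hPbij.mapsTo hw
  set z := zOf w with hzdef
  have hzΩ : z ∈ Ω := hWΩ w hw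
  have hCz : DifferentiableAt ℂ C z := hC.differentiableAt (hΩo.mem_nhds hzΩ)
  have hCd : HasDerivAt C (deriv C z) z := hCz.hasDerivAt
  set x' : ℂ := (deriv C z).1 with hx'def
  set y' : ℂ := (deriv C z).2 with hy'def
  have hx : HasDerivAt (fun ζ => (C ζ).1) x' z := hCd.fst'
  have hy : HasDerivAt (fun ζ => (C ζ).2) y' z := hCd.snd'
  set Lx : ℂ →L[ℝ] ℂ := (ContinuousLinearMap.smulRight (1 : ℂ →L[ℂ] ℂ) x').restrictScalars ℝ
    with hLxdef
  set Ly : ℂ →L[ℝ] ℂ := (ContinuousLinearMap.smulRight (1 : ℂ →L[ℂ] ℂ) y').restrictScalars ℝ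
    with hLydef
  have hXf : HasFDerivAt (fun ζ => (C ζ).1) Lx z := hx.hasFDerivAt.restrictScalars ℝ
  have hYf : HasFDerivAt (fun ζ => (C ζ).2) Ly z := hy.hasFDerivAt.restrictScalars ℝ
  have hre1 : HasFDerivAt (fun v => ((C (zOf v)).1).re)
      (Complex.reCLM.comp (Lx.comp zCLM)) w :=
    (Complex.reCLM.hasFDerivAt).comp w (by have := hXf.comp w (hasFDerivAt_zOf w); exact this)
  have hre2 : HasFDerivAt (fun v => ((C (zOf v)).2).re)
      (Complex.reCLM.comp (Ly.comp zCLM)) w :=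
    (Complex.reCLM.hasFDerivAt).comp w (by have := hYf.comp w (hasFDerivAt_zOf w); exact this)
  have him1 : HasFDerivAt (fun v => ((C (zOf v)).1).im)
      (Complex.imCLM.comp (Lx.comp zCLM)) w :=
    (Complex.imCLM.hasFDerivAt).comp w (by have := hXf.comp w (hasFDerivAt_zOf w); exact this)
  have him2 : HasFDerivAt (fun v => ((C (zOf v)).2).im)
      (Complex.imCLM.comp (Ly.comp zCLM)) w :=
    (Complex.imCLM.hasFDerivAt).comp w (by have := hYf.comp w (hasFDerivAt_zOf w); exact this)
  set A : (ℝ × ℝ) →L[ℝ] (ℝ × ℝ) :=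
    (Complex.reCLM.comp (Lx.comp zCLM)).prod (Complex.reCLM.comp (Ly.comp zCLM)) with hAdef
  set D : (ℝ × ℝ) →L[ℝ] (ℝ × ℝ) :=
    (Complex.imCLM.comp (Ly.comp zCLM)).prod (-(Complex.imCLM.comp (Lx.comp zCLM))) with hDdef
  have hN : HasFDerivAt (fun v => (((C (zOf v)).1).re, ((C (zOf v)).2).re)) A w :=
    hre1.prodMk hre2
  have hΨ : HasFDerivAt (fun v => (((C (zOf v)).2).im, -((C (zOf v)).1).im)) D w :=
    him2.prodMk him1.neg
  have hPA : HasFDerivAt P A w :=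
    hN.congr_of_eventuallyEq (Filter.eventuallyEq_of_mem (hWo.mem_nhds hw) hPN)
  -- second derivative of F
  have hFp : ContDiffAt ℝ 2 F (P w) := (hF (P w) hpE).contDiffAt (hEo.mem_nhds hpE)
  have hΦ : ContDiffAt ℝ 1 (fderiv ℝ F) (P w) := hFp.fderiv_right (by norm_num)
  have hΦd : DifferentiableAt ℝ (fderiv ℝ F) (P w) := hΦ.differentiableAt one_ne_zero
  set BQ : (ℝ × ℝ) →L[ℝ] (ℝ × ℝ) :=
    ((ContinuousLinearMap.apply ℝ ℝ ((1:ℝ), (0:ℝ))).comp (fderiv ℝ (fderiv ℝ F) (P w))).prod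
      ((ContinuousLinearMap.apply ℝ ℝ ((0:ℝ), (1:ℝ))).comp (fderiv ℝ (fderiv ℝ F) (P w)))
    with hBQdef
  have hQ : HasFDerivAt (grad F) BQ (P w) := by
    exact HasFDerivAt.prodMk
      (((ContinuousLinearMap.apply ℝ ℝ ((1:ℝ), (0:ℝ))).hasFDerivAt).comp (P w) hΦd.hasFDerivAt)
      (((ContinuousLinearMap.apply ℝ ℝ ((0:ℝ), (1:ℝ))).hasFDerivAt).comp (P w) hΦd.hasFDerivAt)
  have hQP : HasFDerivAt (fun v => grad F (P v)) (BQ.comp A) w := hQ.comp w hPA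
  have hQPΨ : HasFDerivAt (fun v => grad F (P v)) D w :=
    hΨ.congr_of_eventuallyEq (Filter.eventuallyEq_of_mem (hWo.mem_nhds hw) hGR)
  have huniq : BQ.comp A = D := hQP.unique hQPΨ
  -- evaluate
  set h11 : ℝ := hess F (P w) (1, 0) (1, 0) with h11def
  set h12 : ℝ := hess F (P w) (1, 0) (0, 1) with h12def
  set h21 : ℝ := hess F (P w) (0, 1) (1, 0) with h21def
  set h22 : ℝ := hess F (P w) (0, 1) (0, 1) with h22def
  have hBQapp : ∀ u : ℝ × ℝ, BQ u = (u.1 * h11 + u.2 * h21, u.1 * h12 + u.2 * h22) := by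
    intro u
    have hu : u = u.1 • ((1:ℝ), (0:ℝ)) + u.2 • ((0:ℝ), (1:ℝ)) := by
      ext <;> simp
    have expand : fderiv ℝ (fderiv ℝ F) (P w) u
        = u.1 • (fderiv ℝ (fderiv ℝ F) (P w) ((1:ℝ), (0:ℝ)))
          + u.2 • (fderiv ℝ (fderiv ℝ F) (P w) ((0:ℝ), (1:ℝ))) := by
      conv_lhs => rw [hu]
      rw [map_add, map_smul, map_smul]
    have hBu : BQ u = (fderiv ℝ (fderiv ℝ F) (P w) u ((1:ℝ), (0:ℝ)),
        fderiv ℝ (fderiv ℝ F) (P w) u ((0:ℝ), (1:ℝ))) := by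
      rw [hBQdef]
      simp [ContinuousLinearMap.prod_apply]
    rw [hBu, expand]
    simp only [ContinuousLinearMap.add_apply, ContinuousLinearMap.coe_smul', Pi.smul_apply,
      smul_eq_mul]
    rw [h11def, h12def, h21def, h22def]
    simp only [hess]
  have hAe1 : A ((1:ℝ), (0:ℝ)) = (x'.re, y'.re) := by
    rw [hAdef]
    simp [ContinuousLinearMap.prod_apply, zCLM_apply, zOf, hLxdef, hLydef]
  have hAe2 : A ((0:ℝ), (1:ℝ)) = (-x'.im, -y'.im) := by
    rw [hAdef]
    simp [ContinuousLinearMap.prod_apply, zCLM_apply, zOf, hLxdef, hLydef]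
  have hDe1 : D ((1:ℝ), (0:ℝ)) = (y'.im, -x'.im) := by
    rw [hDdef]
    simp [ContinuousLinearMap.prod_apply, zCLM_apply, zOf, hLxdef, hLydef]
  have hDe2 : D ((0:ℝ), (1:ℝ)) = (y'.re, -x'.re) := by
    rw [hDdef]
    simp [ContinuousLinearMap.prod_apply, zCLM_apply, zOf, hLxdef, hLydef]
  have hv1 : BQ (A ((1:ℝ), (0:ℝ))) = D ((1:ℝ), (0:ℝ)) := by
    have := congrArg (fun L : (ℝ × ℝ) →L[ℝ] (ℝ × ℝ) => L ((1:ℝ), (0:ℝ))) huniq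
    simpa using this
  have hv2 : BQ (A ((0:ℝ), (1:ℝ))) = D ((0:ℝ), (1:ℝ)) := by
    have := congrArg (fun L : (ℝ × ℝ) →L[ℝ] (ℝ × ℝ) => L ((0:ℝ), (1:ℝ))) huniq
    simpa using this
  rw [hAe1, hBQapp, hDe1] at hv1
  rw [hAe2, hBQapp, hDe2] at hv2
  rw [Prod.ext_iff] at hv1 hv2
  obtain ⟨E11, E12⟩ := hv1
  obtain ⟨E21, E22⟩ := hv2
  simp only at E11 E12 E21 E22
  -- nondegeneracy
  have hδ : x'.im * y'.re - x'.re * y'.im ≠ 0 := by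
    intro h0
    apply hCdet w hw
    rw [hderivC z hzΩ]
    rw [← hzdef, ← hx'def, ← hy'def]
    simp only [det2C]
    apply Complex.ext
    · simp [Complex.mul_re]
      ring
    · simp [Complex.mul_im]
      linarith
  have hkey : (x'.im * y'.re - x'.re * y'.im) * (h11 * h22 - h12 * h21)
      = (x'.im * y'.re - x'.re * y'.im) * 1 := by
    linear_combination ((-x'.im) * h12 + (-y'.im) * h22) * E11 + y'.im * E22
      - ((-x'.im) * h11 + (-y'.im) * h21) * E12 + x'.im * E21
  have hdet : h11 * h22 - h12 * h21 = 1 := mul_left_cancel₀ hδ hkey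
  simpa [hessDet, h11def, h12def, h21def, h22def] using hdet
end
end

section
/- Define F : E → ℝ on E = {(x,y) ∈ ℝ² : 2y < x²} by F(x,y) = (1/3)·(x² − 2y)^{3/2}. Then F is C² on E with det(D²F)(x,y) = +1 for all (x,y) ∈ E, and F together with its gradient ∇F extends continuously by zero to the boundary parabola {2y = x²}. Hence F is the outer area distance of the parabola y = x²/2 and its graph is a definite improper affine sphere. -/
noncomputable section

open Filter

/-- The outer area distance of the parabola `y = x²/2`:
`F(x,y) = (1/3)(x² − 2y)^{3/2}` on `E = {2y < x²}`. -/
def FParab (w : ℝ × ℝ) : ℝ := (1 / 3) * (w.1 ^ 2 - 2 * w.2) ^ ((3 : ℝ) / 2)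

/-- The outer parabolic region `E = {(x,y) : 2y < x²}`. -/
def EParab : Set (ℝ × ℝ) := {w : ℝ × ℝ | 2 * w.2 < w.1 ^ 2}

namespace S19
def u (w : ℝ × ℝ) : ℝ := w.1 ^ 2 - 2 * w.2
def Lu (w : ℝ × ℝ) : ℝ × ℝ →L[ℝ] ℝ :=
  (2 * w.1) • ContinuousLinearMap.fst ℝ ℝ ℝ - (2 : ℝ) • ContinuousLinearMap.snd ℝ ℝ ℝ

lemma Lu_apply (w v : ℝ × ℝ) : Lu w v = 2 * w.1 * v.1 - 2 * v.2 := by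
  simp [Lu, mul_assoc]

lemma hasFDerivAt_u (w : ℝ × ℝ) : HasFDerivAt u (Lu w) w := by
  have h1 : HasFDerivAt (fun w : ℝ × ℝ => w.1 ^ 2 - 2 * w.2)
      ((2 * w.1) • ContinuousLinearMap.fst ℝ ℝ ℝ - (2:ℝ) • ContinuousLinearMap.snd ℝ ℝ ℝ) w := by
    have ha : HasFDerivAt (fun w : ℝ × ℝ => w.1 ^ 2)
        ((2 * w.1) • ContinuousLinearMap.fst ℝ ℝ ℝ) w := by
      have hf : HasFDerivAt (fun w : ℝ × ℝ => w.1) (ContinuousLinearMap.fst ℝ ℝ ℝ) w :=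
        hasFDerivAt_fst
      have := hf.mul hf
      have h2 : (fun w : ℝ × ℝ => w.1 ^ 2) = fun w : ℝ × ℝ => w.1 * w.1 := by
        funext z; ring
      rw [h2]
      exact this.congr_fderiv (by ext v <;> simp <;> ring)
    have hb : HasFDerivAt (fun w : ℝ × ℝ => 2 * w.2)
        ((2:ℝ) • ContinuousLinearMap.snd ℝ ℝ ℝ) w := by
      have hs : HasFDerivAt (fun w : ℝ × ℝ => w.2) (ContinuousLinearMap.snd ℝ ℝ ℝ) w :=
        hasFDerivAt_snd
      exact hs.const_mul (2:ℝ)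
    exact ha.sub hb
  exact h1

def Gm (w : ℝ × ℝ) : ℝ × ℝ →L[ℝ] ℝ := ((1/2) * u w ^ ((1:ℝ)/2)) • Lu w

lemma hasFDerivAt_F (w : ℝ × ℝ) (hw : 0 < u w) : HasFDerivAt FParab (Gm w) w := by
  have h := (Real.hasDerivAt_rpow_const (x := u w) (p := (3:ℝ)/2)
      (Or.inr (by norm_num))).comp_hasFDerivAt w (hasFDerivAt_u w)
  have h2 := h.const_mul (1/3 : ℝ)
  have e : (3:ℝ)/2 - 1 = 1/2 := by norm_num
  rw [e] at h2
  have h3 : (1/3 : ℝ) • ((3/2 * u w ^ ((1:ℝ)/2)) • Lu w) = Gm w := by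
    rw [Gm, smul_smul]
    congr 1
    ring
  rw [h3] at h2
  exact h2

def cd (w : ℝ × ℝ) : ℝ × ℝ →L[ℝ] ℝ := ((1/4) * u w ^ (-(1:ℝ)/2)) • Lu w

lemma hasFDerivAt_c (w : ℝ × ℝ) (hw : 0 < u w) :
    HasFDerivAt (fun w => (1/2 : ℝ) * u w ^ ((1:ℝ)/2)) (cd w) w := by
  have h := (Real.hasDerivAt_rpow_const (x := u w) (p := (1:ℝ)/2)
      (Or.inl hw.ne')).comp_hasFDerivAt w (hasFDerivAt_u w)
  have h2 := h.const_mul (1/2 : ℝ)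
  have e : (1:ℝ)/2 - 1 = -1/2 := by norm_num
  rw [e] at h2
  have h3 : (1/2 : ℝ) • ((1/2 * u w ^ (-(1:ℝ)/2)) • Lu w) = cd w := by
    rw [cd, smul_smul]
    congr 1
    ring
  rw [h3] at h2
  exact h2

def LuD : (ℝ × ℝ) →L[ℝ] ((ℝ × ℝ) →L[ℝ] ℝ) :=
  ((2:ℝ) • ContinuousLinearMap.fst ℝ ℝ ℝ).smulRight (ContinuousLinearMap.fst ℝ ℝ ℝ)

lemma hasFDerivAt_Lu (w : ℝ × ℝ) : HasFDerivAt Lu LuD w := by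
  have h := (LuD.hasFDerivAt (x := w)).sub_const ((2:ℝ) • ContinuousLinearMap.snd ℝ ℝ ℝ)
  have h2 : Lu = fun z => LuD z - (2:ℝ) • ContinuousLinearMap.snd ℝ ℝ ℝ := by
    funext z
    ext v <;> simp [Lu, LuD, mul_assoc]
  rw [h2]
  exact h

def Gd (w : ℝ × ℝ) : (ℝ × ℝ) →L[ℝ] ((ℝ × ℝ) →L[ℝ] ℝ) :=
  ((1/2) * u w ^ ((1:ℝ)/2)) • LuD + (cd w).smulRight (Lu w)

lemma hasFDerivAt_Gm (w : ℝ × ℝ) (hw : 0 < u w) : HasFDerivAt Gm (Gd w) w :=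
  (hasFDerivAt_c w hw).smul (hasFDerivAt_Lu w)

lemma isOpen_E : IsOpen EParab :=
  isOpen_lt (by fun_prop) (by fun_prop)

lemma mem_E {w : ℝ × ℝ} (hw : w ∈ EParab) : 0 < u w := by
  simp only [EParab, Set.mem_setOf_eq] at hw
  simp [u]; linarith

lemma fderiv_fderiv_eq (w : ℝ × ℝ) (hw : w ∈ EParab) :
    fderiv ℝ (fderiv ℝ FParab) w = Gd w := by
  have heq : fderiv ℝ FParab =ᶠ[nhds w] Gm := by
    filter_upwards [isOpen_E.mem_nhds hw] with z hz
    exact (hasFDerivAt_F z (mem_E hz)).fderiv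
  rw [heq.fderiv_eq, (hasFDerivAt_Gm w (mem_E hw)).fderiv]

end S19

namespace S19

lemma Gd_apply (w a b : ℝ × ℝ) :
    Gd w a b = (1/2) * u w ^ ((1:ℝ)/2) * (2 * a.1 * b.1)
      + (1/4) * u w ^ (-(1:ℝ)/2) * (2 * w.1 * a.1 - 2 * a.2) * (2 * w.1 * b.1 - 2 * b.2) := by
  simp [Gd, LuD, cd, Lu_apply, ContinuousLinearMap.smulRight_apply,
    ContinuousLinearMap.add_apply, ContinuousLinearMap.smul_apply, smul_eq_mul]
  try ring

lemma rpow_mul_one {w : ℝ × ℝ} (hw : 0 < u w) :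
    u w ^ ((1:ℝ)/2) * u w ^ (-(1:ℝ)/2) = 1 := by
  rw [← Real.rpow_add hw]
  norm_num

theorem part2 (w : ℝ × ℝ) (hw : w ∈ EParab) : hessDet FParab w = 1 := by
  have h := fderiv_fderiv_eq w hw
  simp only [hessDet, hess, h, Gd_apply]
  have hst := rpow_mul_one (mem_E hw)
  norm_num
  nlinarith [hst]

theorem part1 : ContDiffOn ℝ 2 FParab EParab := by
  intro w hw
  apply ContDiffAt.contDiffWithinAt
  have hu : ContDiff ℝ 2 u := by unfold u; fun_prop
  have h1 : ContDiffAt ℝ 2 (fun t : ℝ => t ^ ((3:ℝ)/2)) (u w) :=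
    Real.contDiffAt_rpow_const_of_ne (mem_E hw).ne'
  exact contDiffAt_const.mul (h1.comp w hu.contDiffAt)

lemma u_boundary (x : ℝ) : u (x, x ^ 2 / 2) = 0 := by simp [u]; ring

theorem part3a (x : ℝ) : Tendsto FParab (nhdsWithin (x, x ^ 2 / 2) EParab) (nhds 0) := by
  have h1 : ContinuousAt (fun t : ℝ => t ^ ((3:ℝ)/2)) (u (x, x ^ 2 / 2)) :=
    Real.continuousAt_rpow_const _ _ (Or.inr (by norm_num))
  have h2 : ContinuousAt u (x, x ^ 2 / 2) := by unfold u; fun_prop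
  have hc : ContinuousAt FParab (x, x ^ 2 / 2) := continuousAt_const.mul (h1.comp h2)
  have h0 : FParab (x, x ^ 2 / 2) = 0 := by
    have : x ^ 2 - 2 * (x ^ 2 / 2) = 0 := by ring
    simp [FParab, this, Real.zero_rpow (by norm_num : ((3:ℝ)/2) ≠ 0)]
  have := hc.tendsto.mono_left (nhdsWithin_le_nhds (s := EParab))
  rwa [h0] at this

def g (z : ℝ × ℝ) : ℝ × ℝ := (z.1 * u z ^ ((1:ℝ)/2), -(u z ^ ((1:ℝ)/2)))

lemma grad_eq {z : ℝ × ℝ} (hz : z ∈ EParab) : grad FParab z = g z := by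
  have h := (hasFDerivAt_F z (mem_E hz)).fderiv
  simp only [grad, h, g, Gm, ContinuousLinearMap.smul_apply, Lu_apply, smul_eq_mul]
  refine Prod.ext ?_ ?_ <;> simp <;> ring

theorem part3b (x : ℝ) :
    Tendsto (grad FParab) (nhdsWithin (x, x ^ 2 / 2) EParab) (nhds (0, 0)) := by
  have h2 : ContinuousAt (fun z => u z ^ ((1:ℝ)/2)) (x, x ^ 2 / 2) := by
    have hr : ContinuousAt (fun t : ℝ => t ^ ((1:ℝ)/2)) (u (x, x ^ 2 / 2)) :=
      Real.continuousAt_rpow_const _ _ (Or.inr (by norm_num))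
    exact hr.comp (by unfold u; fun_prop)
  have hg : ContinuousAt g (x, x ^ 2 / 2) := by
    apply ContinuousAt.prodMk
    · exact continuousAt_fst.mul h2
    · exact h2.neg
  have h0 : g (x, x ^ 2 / 2) = (0, 0) := by
    simp [g, u_boundary, Real.zero_rpow (by norm_num : ((1:ℝ)/2) ≠ 0)]
  have ht : Tendsto g (nhdsWithin (x, x ^ 2 / 2) EParab) (nhds (0, 0)) := by
    have := hg.tendsto.mono_left (nhdsWithin_le_nhds (s := EParab))
    rwa [h0] at this
  apply ht.congr'
  filter_upwards [self_mem_nhdsWithin] with z hz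
  exact (grad_eq hz).symm

end S19


/-- `F(x,y) = (1/3)(x² − 2y)^{3/2}` is C² on `E = {2y < x²}` with `det D²F ≡ +1`, and `F`
and `∇F` extend continuously by zero to the boundary parabola `{2y = x²}`: `F` is the
outer area distance of the parabola `y = x²/2`, and its graph is a definite improper
affine sphere. -/
theorem statement19 :
    ContDiffOn ℝ 2 FParab EParab ∧
    (∀ w ∈ EParab, hessDet FParab w = 1) ∧
    (∀ x : ℝ,
      Tendsto FParab (nhdsWithin (x, x ^ 2 / 2) EParab) (nhds 0) ∧
      Tendsto (grad FParab) (nhdsWithin (x, x ^ 2 / 2) EParab) (nhds (0, 0))) :=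
  ⟨S19.part1, S19.part2, fun x => ⟨S19.part3a x, S19.part3b x⟩⟩
end
end
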